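/- arXiv:2003.09838 — 2 statements merged into one kernel-verified Lean document; each statement's English description precedes it below -/
import Mathlib

section
/- Let i and d0 be positive integers. There exists a polynomial P with rational coefficients such that P(r) equals the sum of k^i for k from d0 + 1 to r - d0 - 1, for every natural number r with r ≥ 2*d0 + 2, and the constant coefficient of P equals -(1 + (-1)^i) times the sum of k^i for k from 1 to d0. -/
open Polynomial Finset

/-- For positive integers `i, d0` there is `P ∈ ℚ[x]` with
`P(r) = ∑_{k=d0+1}^{r-d0-1} k^i` for all `r ≥ 2*d0+2`, whose constant coefficient is
`-(1 + (-1)^i) ∑_{k=1}^{d0} k^i`. -/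
theorem mid_range_power_sum_polynomial (i d0 : ℕ) (hi : 0 < i) (hd0 : 0 < d0) :
    ∃ P : Polynomial ℚ,
      (∀ r : ℕ, 2 * d0 + 2 ≤ r →
        P.eval (r : ℚ) = ∑ k ∈ Finset.Icc (d0 + 1) (r - d0 - 1), (k : ℚ) ^ i) ∧
      P.coeff 0 = -(1 + (-1) ^ i) * ∑ k ∈ Finset.Icc 1 d0, (k : ℚ) ^ i := by
  set Q : Polynomial ℚ :=
    C ((i + 1 : ℚ)⁻¹) * (Polynomial.bernoulli (i + 1) - C (_root_.bernoulli (i + 1))) with hQdef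
  have hi1 : ((i : ℚ) + 1) ≠ 0 := by positivity
  have hQ : ∀ n : ℕ, Q.eval (n : ℚ) = ∑ k ∈ Finset.range n, (k : ℚ) ^ i := by
    intro n
    have h := Polynomial.sum_range_pow_eq_bernoulli_sub n i
    simp only [Nat.succ_eq_add_one] at h
    have hQe : Q.eval (n : ℚ)
        = ((i : ℚ) + 1)⁻¹ * ((Polynomial.bernoulli (i + 1)).eval (n : ℚ)
          - _root_.bernoulli (i + 1)) := by
      rw [hQdef, eval_mul, eval_sub, eval_C, eval_C]
    rw [hQe, ← h]
    field_simp
  have hstep : ∀ x : ℚ, Q.eval (x + 1) = Q.eval x + x ^ i := by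
    intro x
    have h := Polynomial.bernoulli_eval_one_add (i + 1) x
    simp only [hQdef, eval_mul, eval_C, eval_sub, add_comm x 1]
    rw [h]
    have : (i + 1 : ℕ) - 1 = i := by omega
    rw [this]
    push_cast
    field_simp
    ring
  have hneg : ∀ m : ℕ, Q.eval (-(m : ℚ))
      = -(-1 : ℚ) ^ i * ∑ k ∈ Finset.Icc 1 m, (k : ℚ) ^ i := by
    intro m
    induction m with
    | zero => simpa using hQ 0
    | succ m ih =>
      have h := hstep (-((m : ℚ) + 1))
      have hm : -((m : ℚ) + 1) + 1 = -(m : ℚ) := by ring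
      rw [hm] at h
      have : Q.eval (-((m : ℚ) + 1)) = Q.eval (-(m : ℚ)) - (-((m : ℚ) + 1)) ^ i := by
        linarith [h]
      push_cast
      rw [this, ih, Finset.sum_Icc_succ_top (by omega : 1 ≤ m + 1)]
      have hp : (-((m : ℚ) + 1)) ^ i = (-1 : ℚ) ^ i * ((m : ℚ) + 1) ^ i := by
        rw [← neg_one_mul, mul_pow]
      push_cast
      rw [hp]
      ring
  set S : ℚ := ∑ k ∈ Finset.Icc 1 d0, (k : ℚ) ^ i with hSdef
  refine ⟨Q.comp (X - C (d0 : ℚ)) - C S, ?_, ?_⟩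
  · intro r hr
    have hrd : d0 ≤ r := by omega
    have hc : ((r - d0 : ℕ) : ℚ) = (r : ℚ) - d0 := by
      push_cast [Nat.cast_sub hrd]; ring
    rw [eval_sub, eval_comp, eval_sub, eval_X, eval_C, eval_C, ← hc, hQ]
    have hsplit : ∑ k ∈ Finset.range (r - d0), (k : ℚ) ^ i
        = S + ∑ k ∈ Finset.Icc (d0 + 1) (r - d0 - 1), (k : ℚ) ^ i := by
      rw [Finset.range_eq_Ico,
        ← Finset.sum_Ico_consecutive _ (by omega : 0 ≤ d0 + 1) (by omega : d0 + 1 ≤ r - d0)]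
      congr 1
      · rw [hSdef]
        rw [show Finset.Ico 0 (d0 + 1) = insert 0 (Finset.Icc 1 d0) from by
          ext x; simp [Finset.mem_Ico, Finset.mem_Icc]; omega]
        rw [Finset.sum_insert (by simp)]
        simp [zero_pow hi.ne']
      · rw [show r - d0 = (r - d0 - 1) + 1 by omega, Finset.Ico_add_one_right_eq_Icc]
        rw [show r - d0 - 1 + 1 - 1 = r - d0 - 1 by omega]
    rw [hsplit]; ring
  · rw [Polynomial.coeff_zero_eq_eval_zero, eval_sub, eval_comp, eval_sub, eval_X, eval_C, eval_C,
      zero_sub, hneg d0, ← hSdef]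
    ring
end

section
/- Let i be a positive even integer and d0 a positive integer. If P is a polynomial with rational coefficients such that P(r) equals the sum of k^i for k from d0 + 1 to r - d0 - 1 for all natural numbers r ≥ 2*d0 + 2, then the constant coefficient of P equals -2 times the sum of k^i for k from 1 to d0. -/
open Polynomial Finset

lemma eq_of_eval_nat_ge {p q : Polynomial ℚ} (N : ℕ)
    (h : ∀ n : ℕ, N ≤ n → p.eval (n:ℚ) = q.eval (n:ℚ)) : p = q := by
  apply Polynomial.eq_of_infinite_eval_eq
  refine Set.Infinite.mono ?_ ((Set.Ici_infinite N).image
      (f := fun n : ℕ => (n:ℚ))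
      (fun a _ b _ hab => (Nat.cast_injective : Function.Injective ((↑) : ℕ → ℚ)) hab))
  rintro x ⟨n, hn, rfl⟩; exact h n hn

noncomputable def Qpoly (i : ℕ) : Polynomial ℚ :=
  ∑ j ∈ Finset.range (i+1),
    Polynomial.C (_root_.bernoulli j * ((i+1).choose j) / (i+1)) * Polynomial.X^(i+1-j)

lemma Qpoly_eval (i n : ℕ) : (Qpoly i).eval (n:ℚ) = ∑ k ∈ Finset.range n, (k:ℚ)^i := by
  rw [sum_range_pow, Qpoly, Polynomial.eval_finset_sum]
  refine Finset.sum_congr rfl fun j _ => ?_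
  simp [div_mul_eq_mul_div]

lemma Qpoly_shift (i : ℕ) :
    (Qpoly i).comp (Polynomial.X + Polynomial.C 1) - Qpoly i = Polynomial.X ^ i := by
  apply eq_of_eval_nat_ge 0
  intro n _
  have h1 : ((n:ℚ) + 1) = ((n+1 : ℕ) : ℚ) := by push_cast; ring
  simp only [Polynomial.eval_sub, Polynomial.eval_comp, Polynomial.eval_add, Polynomial.eval_X,
    Polynomial.eval_C, Polynomial.eval_pow, h1, Qpoly_eval]
  rw [Finset.sum_range_succ]
  ring

lemma Qpoly_neg (i : ℕ) (heven : Even i) (m : ℕ) :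
    (Qpoly i).eval (-(m:ℚ)) = -∑ k ∈ Finset.Icc 1 m, (k:ℚ)^i := by
  induction m with
  | zero => simpa using Qpoly_eval i 0
  | succ m ih =>
    have hs := Qpoly_shift i
    have := congrArg (Polynomial.eval (-((m:ℚ)+1))) hs
    simp only [Polynomial.eval_sub, Polynomial.eval_comp, Polynomial.eval_add, Polynomial.eval_X,
      Polynomial.eval_C, Polynomial.eval_pow] at this
    have hneg : (-((m:ℚ)+1) + 1) = -(m:ℚ) := by ring
    rw [hneg, ih] at this
    have hpow : (-((m:ℚ)+1)) ^ i = ((m:ℚ)+1) ^ i := heven.neg_pow ((m:ℚ)+1)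
    have : (Qpoly i).eval (-((m:ℚ)+1)) = -∑ k ∈ Finset.Icc 1 m, (k:ℚ)^i - ((m:ℚ)+1)^i := by
      rw [← hpow]; linarith [this]
    rw [Nat.cast_succ, this, Finset.sum_Icc_succ_top (by omega : 1 ≤ m + 1)]
    push_cast; ring


/-- For even positive `i` and positive `d0`, any `P ∈ ℚ[x]` with
`P(r) = ∑_{k=d0+1}^{r-d0-1} k^i` for all `r ≥ 2*d0+2` has constant coefficient
`-2 ∑_{k=1}^{d0} k^i`. -/
theorem mid_range_power_sum_even_constant (i d0 : ℕ) (hi : 0 < i) (heven : Even i)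
    (hd0 : 0 < d0) (P : Polynomial ℚ)
    (hP : ∀ r : ℕ, 2 * d0 + 2 ≤ r →
      P.eval (r : ℚ) = ∑ k ∈ Finset.Icc (d0 + 1) (r - d0 - 1), (k : ℚ) ^ i) :
    P.coeff 0 = -2 * ∑ k ∈ Finset.Icc 1 d0, (k : ℚ) ^ i := by
  have key : P = (Qpoly i).comp (Polynomial.X - Polynomial.C (d0:ℚ))
      - Polynomial.C ((Qpoly i).eval ((d0+1 : ℕ) : ℚ)) := by
    apply eq_of_eval_nat_ge (2*d0+2)
    intro r hr
    rw [hP r hr]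
    have hc : (r:ℚ) - (d0:ℚ) = ((r - d0 : ℕ) : ℚ) := by
      rw [Nat.cast_sub (by omega)]
    simp only [Polynomial.eval_sub, Polynomial.eval_comp, Polynomial.eval_X, Polynomial.eval_C,
      hc, Qpoly_eval]
    have h1 : Finset.Icc (d0+1) (r - d0 - 1) = Finset.Ico (d0+1) (r - d0) := by
      rw [← Finset.Ico_add_one_right_eq_Icc]
      congr 1
      omega
    rw [h1, Finset.sum_Ico_eq_sub _ (by omega)]
  have hS : (Qpoly i).eval ((d0+1 : ℕ) : ℚ) = ∑ k ∈ Finset.Icc 1 d0, (k:ℚ)^i := by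
    rw [Qpoly_eval]
    have h1 : Finset.Icc 1 d0 = Finset.Ico 1 (d0+1) := by rw [Finset.Ico_add_one_right_eq_Icc]
    rw [h1, Finset.sum_Ico_eq_sub _ (by omega)]
    simp [zero_pow hi.ne']
  rw [Polynomial.coeff_zero_eq_eval_zero, key]
  simp only [Polynomial.eval_sub, Polynomial.eval_comp, Polynomial.eval_X, Polynomial.eval_C]
  rw [hS, zero_sub, Qpoly_neg i heven d0]
  ring
end
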